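/- Let X and Y be finite-dimensional *-vector spaces, Γ : X → Y a Hermiticity preserving linear isomorphism, ⟨·,·⟩_{X,Y} a non-degenerate Hermiticity preserving bilinear pairing on X × Y, and ⟨·,·⟩_Y a non-degenerate Hermiticity preserving bilinear form on Y × Y. The following are equivalent: (i) there exists λ > 0 such that ⟨x,y⟩_{X,Y} = λ⟨Γ(x),y⟩_Y for all x ∈ X, y ∈ Y; (ii) for every closed convex cone C of X_h, the dual cone of C in Y_h with respect to ⟨·,·⟩_{X,Y} equals the dual cone of Γ(C) with respect to ⟨·,·⟩_Y; (iii) for every closed convex cone D of Y_h, Γ maps the dual cone of D in X_h (with respect to ⟨·,·⟩_{X,Y}) onto the dual cone of D in Y_h (with respect to ⟨·,·⟩_Y). -/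

import Mathlib

open scoped ComplexOrder

/-- A closed convex cone consisting of Hermitian elements of a ∗-vector space. -/
def IsClosedConvexConeH {X : Type*} [NormedAddCommGroup X] [Module ℂ X] [Star X]
    (C : Set X) : Prop :=
  (∀ x ∈ C, star x = x) ∧ (0 : X) ∈ C ∧ (∀ x ∈ C, ∀ y ∈ C, x + y ∈ C) ∧
    (∀ r : ℝ, 0 ≤ r → ∀ x ∈ C, (r : ℂ) • x ∈ C) ∧ IsClosed C

/-- The dual cone in `Y_h` of a subset of `X_h` with respect to a bilinear pairing. -/
def dualConeR {X Y : Type*} [AddCommGroup X] [Module ℂ X]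
    [AddCommGroup Y] [Module ℂ Y] [Star Y]
    (B : X →ₗ[ℂ] Y →ₗ[ℂ] ℂ) (C : Set X) : Set Y :=
  {y | star y = y ∧ ∀ x ∈ C, 0 ≤ B x y}

/-- The dual cone in `X_h` of a subset of `Y_h` with respect to a bilinear pairing. -/
def dualConeL {X Y : Type*} [AddCommGroup X] [Module ℂ X] [Star X]
    [AddCommGroup Y] [Module ℂ Y]
    (B : X →ₗ[ℂ] Y →ₗ[ℂ] ℂ) (D : Set Y) : Set X :=
  {x | star x = x ∧ ∀ y ∈ D, 0 ≤ B x y}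

/- ### Auxiliary lemmas -/

lemma zero_le_real_mul {l : ℝ} (hl : 0 < l) (z : ℂ) : 0 ≤ (l:ℂ) * z ↔ 0 ≤ z := by
  constructor
  · intro h
    have : 0 ≤ ((l⁻¹:ℝ):ℂ) * ((l:ℂ) * z) := mul_nonneg (by rw [Complex.zero_le_real]; positivity) h
    rwa [← mul_assoc, ← Complex.ofReal_mul, inv_mul_cancel₀ hl.ne', Complex.ofReal_one, one_mul] at this
  · intro h
    exact mul_nonneg (by rw [Complex.zero_le_real]; positivity) h

lemma herm_decomp {Y : Type*} [AddCommGroup Y] [Module ℂ Y] [StarAddMonoid Y] [StarModule ℂ Y]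
    (y : Y) :
    ∃ h₁ h₂ : Y, star h₁ = h₁ ∧ star h₂ = h₂ ∧ y = h₁ + Complex.I • h₂ := by
  refine ⟨((2⁻¹:ℝ):ℂ) • (y + star y), (((2⁻¹:ℝ):ℂ) * (-Complex.I)) • (y - star y), ?_, ?_, ?_⟩
  · rw [star_smul, star_add, star_star]
    simp [Complex.star_def, Complex.conj_ofReal, add_comm]
  · rw [star_smul, star_sub, star_star]
    have h1 : star (((2⁻¹:ℝ):ℂ) * (-Complex.I)) = ((2⁻¹:ℝ):ℂ) * Complex.I := by
      simp [Complex.star_def, Complex.conj_ofReal]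
    rw [h1]
    have h2 : star y - y = -(y - star y) := by abel
    rw [h2, smul_neg, ← neg_smul]
    ring_nf
  · rw [smul_smul]
    have h3 : Complex.I * (((2⁻¹:ℝ):ℂ) * (-Complex.I)) = ((2⁻¹:ℝ):ℂ) := by
      push_cast; ring_nf; rw [Complex.I_sq]; ring
    rw [h3, ← smul_add]
    have h4 : (y + star y) + (y - star y) = (2:ℂ) • y := by
      rw [two_smul]; abel
    rw [h4, smul_smul]
    norm_num

lemma herm_real {Y : Type*} [AddCommGroup Y] [Module ℂ Y] [StarAddMonoid Y]
    (f : Y →ₗ[ℂ] ℂ) (hf : ∀ y, f (star y) = starRingEnd ℂ (f y)) {y : Y} (hy : star y = y) :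
    f y = ((f y).re : ℂ) := by
  have h := hf y
  rw [hy] at h
  exact (Complex.conj_eq_iff_re.mp h.symm).symm

lemma funct_prop {Y : Type*} [AddCommGroup Y] [Module ℂ Y] [StarAddMonoid Y] [StarModule ℂ Y]
    (f g : Y →ₗ[ℂ] ℂ)
    (hf : ∀ y, f (star y) = starRingEnd ℂ (f y))
    (hg : ∀ y, g (star y) = starRingEnd ℂ (g y))
    (hsign : ∀ y, star y = y → (0 ≤ f y ↔ 0 ≤ g y))
    (hg0 : g ≠ 0) :
    ∃ c : ℝ, 0 < c ∧ ∀ y, f y = (c:ℂ) * g y := by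
  obtain ⟨y, hy⟩ : ∃ y, g y ≠ 0 := by
    by_contra h
    push_neg at h
    exact hg0 (LinearMap.ext fun y => h y)
  obtain ⟨h₁, h₂, hh₁, hh₂, rfl⟩ := herm_decomp y
  have hw : ∃ w : Y, star w = w ∧ g w ≠ 0 := by
    by_cases h1 : g h₁ = 0
    · refine ⟨h₂, hh₂, fun h2 => hy ?_⟩
      simp [map_add, map_smul, h1, h2]
    · exact ⟨h₁, hh₁, h1⟩
  obtain ⟨w, hws, hgw⟩ := hw
  set a : ℝ := (g w).re with ha
  have hgwa : g w = (a:ℂ) := herm_real g hg hws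
  have ha0 : a ≠ 0 := fun h => hgw (by rw [hgwa, h, Complex.ofReal_zero])
  set y₀ : Y := ((a⁻¹:ℝ):ℂ) • w with hy₀
  have hy₀s : star y₀ = y₀ := by
    rw [hy₀, star_smul, hws]
    simp [Complex.star_def, Complex.conj_ofReal]
  have hgy₀ : g y₀ = 1 := by
    rw [hy₀, map_smul, smul_eq_mul, hgwa, ← Complex.ofReal_mul, inv_mul_cancel₀ ha0,
      Complex.ofReal_one]
  set c : ℝ := (f y₀).re with hc
  have hfy₀ : f y₀ = (c:ℂ) := herm_real f hf hy₀s
  have hcpos : 0 < c := by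
    have h1 : 0 ≤ f y₀ := (hsign y₀ hy₀s).mpr (by rw [hgy₀]; exact zero_le_one)
    have h2 : 0 ≤ c := by rwa [hfy₀, Complex.zero_le_real] at h1
    rcases h2.lt_or_eq with h | h
    · exact h
    · exfalso
      have h3 : 0 ≤ f (-y₀) := by rw [map_neg, hfy₀, ← h]; simp
      have h4 : 0 ≤ g (-y₀) := (hsign (-y₀) (by rw [star_neg, hy₀s])).mp h3
      rw [map_neg, hgy₀] at h4
      have h5 : (0:ℝ) ≤ -1 := Complex.zero_le_real.mp (by exact_mod_cast h4)
      linarith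
  refine ⟨c, hcpos, ?_⟩
  have hherm : ∀ y : Y, star y = y → f y = (c:ℂ) * g y := by
    intro y hys
    set t : ℝ := (g y).re with ht
    have hgy : g y = (t:ℂ) := herm_real g hg hys
    set z : Y := y - ((t:ℝ):ℂ) • y₀ with hz
    have hzs : star z = z := by
      rw [hz, star_sub, hys, star_smul, hy₀s]
      simp [Complex.star_def, Complex.conj_ofReal]
    have hgz : g z = 0 := by
      rw [hz, map_sub, map_smul, smul_eq_mul, hgy₀, hgy]; ring
    have hfz : f z = 0 := by
      have h1 : 0 ≤ f z := (hsign z hzs).mpr (by rw [hgz])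
      have h2 : 0 ≤ f (-z) := (hsign (-z) (by rw [star_neg, hzs])).mpr (by rw [map_neg, hgz]; simp)
      rw [map_neg] at h2
      exact le_antisymm (neg_nonneg.mp h2) h1
    have : f y = ((t:ℝ):ℂ) * f y₀ := by
      have := hfz
      rw [hz, map_sub, map_smul, smul_eq_mul, sub_eq_zero] at this
      exact this
    rw [this, hfy₀, hgy]; ring
  intro y
  obtain ⟨h₁, h₂, hh₁, hh₂, rfl⟩ := herm_decomp y
  rw [map_add, map_smul, map_add, map_smul, hherm h₁ hh₁, hherm h₂ hh₂, smul_eq_mul, smul_eq_mul]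
  ring

lemma key_prop {X Y : Type*} [AddCommGroup X] [Module ℂ X] [StarAddMonoid X] [StarModule ℂ X]
    [AddCommGroup Y] [Module ℂ Y] [StarAddMonoid Y] [StarModule ℂ Y]
    (B B' : X →ₗ[ℂ] Y →ₗ[ℂ] ℂ)
    (hBh : ∀ x y, B (star x) (star y) = starRingEnd ℂ (B x y))
    (hB'h : ∀ x y, B' (star x) (star y) = starRingEnd ℂ (B' x y))
    (hnd : ∀ x, (∀ y, B' x y = 0) → x = 0)
    (hsign : ∀ x, star x = x → ∀ y, star y = y → (0 ≤ B x y ↔ 0 ≤ B' x y)) :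
    ∃ l : ℝ, 0 < l ∧ ∀ x y, B x y = (l:ℂ) * B' x y := by
  have getc : ∀ x : X, star x = x → x ≠ 0 → ∃ c : ℝ, 0 < c ∧ ∀ y, B x y = (c:ℂ) * B' x y :=
    fun x hxs hx0 =>
      funct_prop (B x) (B' x)
        (fun y => by rw [← hBh x y, hxs])
        (fun y => by rw [← hB'h x y, hxs])
        (hsign x hxs)
        (fun h => hx0 (hnd x fun y => by rw [h]; rfl))
  have hex : ∀ x : X, x ≠ 0 → ∃ y, B' x y ≠ 0 := by
    intro x hx
    by_contra h
    push_neg at h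
    exact hx (hnd x h)
  have hconst : ∀ x₁ x₂ : X, star x₁ = x₁ → star x₂ = x₂ → x₁ ≠ 0 → x₂ ≠ 0 →
      ∀ c₁ c₂ : ℝ, (∀ y, B x₁ y = (c₁:ℂ) * B' x₁ y) → (∀ y, B x₂ y = (c₂:ℂ) * B' x₂ y) →
      c₁ = c₂ := by
    intro x₁ x₂ hx₁s hx₂s hx₁ hx₂ c₁ c₂ hc₁ hc₂
    by_cases hdep : ∃ s : ℂ, ∀ y, B' x₂ y = s * B' x₁ y
    · obtain ⟨s, hs⟩ := hdep
      have hx2eq : x₂ = s • x₁ := by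
        have h0 : ∀ y, B' (x₂ - s • x₁) y = 0 := by
          intro y
          rw [map_sub, map_smul, LinearMap.sub_apply, LinearMap.smul_apply, smul_eq_mul, hs y]
          ring
        have := hnd _ h0
        rwa [sub_eq_zero] at this
      have hs0 : s ≠ 0 := fun h => hx₂ (by rw [hx2eq, h, zero_smul])
      obtain ⟨y, hy⟩ := hex x₁ hx₁
      have e1 : B x₂ y = s * ((c₁:ℂ) * B' x₁ y) := by
        rw [hx2eq, map_smul, LinearMap.smul_apply, smul_eq_mul, hc₁ y]
      have e2 : B x₂ y = (c₂:ℂ) * (s * B' x₁ y) := by rw [hc₂ y, hs y]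
      have e3 : (c₁:ℂ) * (s * B' x₁ y) = (c₂:ℂ) * (s * B' x₁ y) := by
        rw [← e2, e1]; ring
      have := mul_right_cancel₀ (mul_ne_zero hs0 hy) e3
      exact_mod_cast this
    · have hx3s : star (x₁ + x₂) = x₁ + x₂ := by rw [star_add, hx₁s, hx₂s]
      have hx30 : x₁ + x₂ ≠ 0 := by
        intro h
        refine hdep ⟨-1, fun y => ?_⟩
        have : x₂ = -x₁ := by rw [eq_neg_iff_add_eq_zero, add_comm]; exact h
        rw [this, map_neg, LinearMap.neg_apply]; ring
      obtain ⟨c₃, hc₃pos, hc₃⟩ := getc _ hx3s hx30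
      have heq : ∀ y, ((c₁:ℂ) - c₃) * B' x₁ y = ((c₃:ℂ) - c₂) * B' x₂ y := by
        intro y
        have h1 : B (x₁ + x₂) y = (c₁:ℂ) * B' x₁ y + (c₂:ℂ) * B' x₂ y := by
          rw [map_add, LinearMap.add_apply, hc₁ y, hc₂ y]
        have h2 : B (x₁ + x₂) y = (c₃:ℂ) * (B' x₁ y + B' x₂ y) := by
          rw [hc₃ y, map_add, LinearMap.add_apply]
        linear_combination h2 - h1
      have hc32 : (c₃:ℂ) = (c₂:ℂ) := by
        by_contra h
        refine hdep ⟨((c₁:ℂ) - c₃) / ((c₃:ℂ) - c₂), fun y => ?_⟩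
        have hne : ((c₃:ℂ) - c₂) ≠ 0 := sub_ne_zero.mpr h
        field_simp
        linear_combination -(heq y)
      obtain ⟨y, hy⟩ := hex x₁ hx₁
      have := heq y
      rw [hc32, sub_self, zero_mul] at this
      have h4 : (c₁:ℂ) - c₂ = 0 := by
        rcases mul_eq_zero.mp this with h | h
        · exact h
        · exact absurd h hy
      have h5 : (c₁:ℂ) = (c₂:ℂ) := sub_eq_zero.mp h4
      exact_mod_cast h5
  by_cases hT : ∀ x : X, star x = x → x = 0
  · refine ⟨1, one_pos, fun x y => ?_⟩
    obtain ⟨h₁, h₂, hh₁, hh₂, rfl⟩ := herm_decomp x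
    rw [hT h₁ hh₁, hT h₂ hh₂]
    simp
  · push_neg at hT
    obtain ⟨x₀, hx₀s, hx₀⟩ := hT
    obtain ⟨l, hl, hl'⟩ := getc x₀ hx₀s hx₀
    refine ⟨l, hl, ?_⟩
    have hherm : ∀ x, star x = x → ∀ y, B x y = (l:ℂ) * B' x y := by
      intro x hxs y
      by_cases hx : x = 0
      · subst hx; simp
      · obtain ⟨c, _, hc'⟩ := getc x hxs hx
        have : c = l := hconst x x₀ hxs hx₀s hx hx₀ c l hc' hl'
        rw [hc' y, this]
    intro x y
    obtain ⟨h₁, h₂, hh₁, hh₂, rfl⟩ := herm_decomp x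
    rw [map_add, map_smul, LinearMap.add_apply, LinearMap.smul_apply, smul_eq_mul,
      hherm h₁ hh₁ y, hherm h₂ hh₂ y, map_add, map_smul, LinearMap.add_apply,
      LinearMap.smul_apply, smul_eq_mul]
    ring

lemma rayCone_closed {X : Type*} [NormedAddCommGroup X] [NormedSpace ℂ X]
    [FiniteDimensional ℂ X] (x : X) :
    IsClosed {z : X | ∃ r : ℝ, 0 ≤ r ∧ z = (r:ℂ) • x} := by
  by_cases hx : x = 0
  · subst hx
    have : {z : X | ∃ r : ℝ, 0 ≤ r ∧ z = (r:ℂ) • (0:X)} = {0} := by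
      ext z
      simp only [smul_zero, Set.mem_setOf_eq, Set.mem_singleton_iff]
      exact ⟨fun ⟨r, _, h⟩ => h, fun h => ⟨0, le_refl 0, h⟩⟩
    rw [this]
    exact isClosed_singleton
  · have hkey : {z : X | ∃ r : ℝ, 0 ≤ r ∧ z = (r:ℂ) • x}
        = (LinearMap.toSpanSingleton ℝ X x) '' Set.Ici 0 := by
      ext z
      simp only [Set.mem_setOf_eq, Set.mem_image, Set.mem_Ici, LinearMap.toSpanSingleton_apply]
      constructor
      · rintro ⟨r, hr, rfl⟩; exact ⟨r, hr, (Complex.coe_smul r x).symm⟩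
      · rintro ⟨r, hr, rfl⟩; exact ⟨r, hr, (Complex.coe_smul r x).symm⟩
    rw [hkey]
    have hker : LinearMap.ker (LinearMap.toSpanSingleton ℝ X x) = ⊥ :=
      LinearMap.ker_toSpanSingleton (R := ℝ) (M := X) hx
    exact ((LinearMap.toSpanSingleton ℝ X x).isClosedEmbedding_of_injective hker).isClosedMap
      _ isClosed_Ici

lemma rayCone_isCone {X : Type*} [NormedAddCommGroup X] [NormedSpace ℂ X] [StarAddMonoid X]
    [StarModule ℂ X] [FiniteDimensional ℂ X] {x : X} (hx : star x = x) :
    IsClosedConvexConeH {z : X | ∃ r : ℝ, 0 ≤ r ∧ z = (r:ℂ) • x} := by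
  refine ⟨?_, ⟨0, le_refl 0, by simp⟩, ?_, ?_, rayCone_closed x⟩
  · rintro z ⟨r, hr, rfl⟩
    rw [star_smul, hx]
    simp [Complex.star_def, Complex.conj_ofReal]
  · rintro a ⟨r, hr, rfl⟩ b ⟨s, hs, rfl⟩
    exact ⟨r + s, by positivity, by push_cast; rw [add_smul]⟩
  · rintro t ht z ⟨r, hr, rfl⟩
    exact ⟨t * r, mul_nonneg ht hr, by push_cast; rw [mul_smul]⟩

/-- For a Hermiticity preserving linear isomorphism `Γ : X → Y`,
a non-degenerate Hermiticity preserving pairing `B` on `X × Y` and a non-degenerate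
Hermiticity preserving bilinear form `BY` on `Y`, the following are equivalent:
(i) `B = λ⟨Γ(·),·⟩_Y` for some `λ > 0`; (ii) for every closed convex cone `C` of `X_h`,
the dual of `C` w.r.t. `B` equals the dual of `Γ(C)` w.r.t. `BY`; (iii) for every
closed convex cone `D` of `Y_h`, `Γ` maps the dual of `D` w.r.t. `B` onto the dual
of `D` w.r.t. `BY`. -/
theorem stmt_2 {X Y : Type*}
    [NormedAddCommGroup X] [NormedSpace ℂ X] [StarAddMonoid X] [StarModule ℂ X]
    [FiniteDimensional ℂ X]
    [NormedAddCommGroup Y] [NormedSpace ℂ Y] [StarAddMonoid Y] [StarModule ℂ Y]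
    [FiniteDimensional ℂ Y]
    (Γ : X ≃ₗ[ℂ] Y) (hΓ : ∀ x, Γ (star x) = star (Γ x))
    (B : X →ₗ[ℂ] Y →ₗ[ℂ] ℂ)
    (hBnd : (∀ x, (∀ y, B x y = 0) → x = 0) ∧ (∀ y, (∀ x, B x y = 0) → y = 0))
    (hBh : ∀ x y, B (star x) (star y) = starRingEnd ℂ (B x y))
    (BY : Y →ₗ[ℂ] Y →ₗ[ℂ] ℂ)
    (hYnd : (∀ y, (∀ y', BY y y' = 0) → y = 0) ∧ (∀ y', (∀ y, BY y y' = 0) → y' = 0))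
    (hYh : ∀ y y', BY (star y) (star y') = starRingEnd ℂ (BY y y')) :
    ((∃ l : ℝ, 0 < l ∧ ∀ x y, B x y = (l : ℂ) * BY (Γ x) y) ↔
      ∀ C : Set X, IsClosedConvexConeH C → dualConeR B C = dualConeR BY (⇑Γ '' C)) ∧
    ((∃ l : ℝ, 0 < l ∧ ∀ x y, B x y = (l : ℂ) * BY (Γ x) y) ↔
      ∀ D : Set Y, IsClosedConvexConeH D → ⇑Γ '' dualConeL B D = dualConeL BY D) := by
  -- the comparison pairing
  set B' : X →ₗ[ℂ] Y →ₗ[ℂ] ℂ := BY ∘ₗ (Γ : X →ₗ[ℂ] Y) with hB'def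
  have hB'app : ∀ x y, B' x y = BY (Γ x) y := fun x y => rfl
  have hB'h : ∀ x y, B' (star x) (star y) = starRingEnd ℂ (B' x y) := by
    intro x y
    rw [hB'app, hB'app, hΓ]
    exact hYh _ _
  have hnd' : ∀ x, (∀ y, B' x y = 0) → x = 0 := by
    intro x h
    have h1 : Γ x = 0 := hYnd.1 (Γ x) (fun y => h y)
    exact Γ.map_eq_zero_iff.mp h1
  constructor
  · constructor
    · rintro ⟨l, hl, hB⟩ C _
      ext y
      simp only [dualConeR, Set.mem_setOf_eq]
      constructor
      · rintro ⟨hys, h⟩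
        refine ⟨hys, ?_⟩
        rintro z ⟨x, hx, rfl⟩
        have h1 := h x hx
        rw [hB x y] at h1
        exact (zero_le_real_mul hl _).mp h1
      · rintro ⟨hys, h⟩
        refine ⟨hys, fun x hx => ?_⟩
        rw [hB x y]
        exact (zero_le_real_mul hl _).mpr (h _ ⟨x, hx, rfl⟩)
    · intro hii
      have hsign : ∀ x, star x = x → ∀ y, star y = y → (0 ≤ B x y ↔ 0 ≤ B' x y) := by
        intro x hxs y hys
        have hset := hii {z | ∃ r : ℝ, 0 ≤ r ∧ z = (r:ℂ) • x} (rayCone_isCone hxs)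
        have hxC : x ∈ {z | ∃ r : ℝ, 0 ≤ r ∧ z = (r:ℂ) • x} := ⟨1, zero_le_one, by simp⟩
        have hL : y ∈ dualConeR B {z | ∃ r : ℝ, 0 ≤ r ∧ z = (r:ℂ) • x} ↔ 0 ≤ B x y := by
          constructor
          · intro h; exact h.2 x hxC
          · intro h
            refine ⟨hys, ?_⟩
            rintro z ⟨r, hr, rfl⟩
            rw [map_smul, LinearMap.smul_apply, smul_eq_mul]
            exact mul_nonneg (Complex.zero_le_real.mpr hr) h
        have hR : y ∈ dualConeR BY (⇑Γ '' {z | ∃ r : ℝ, 0 ≤ r ∧ z = (r:ℂ) • x}) ↔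
            0 ≤ BY (Γ x) y := by
          constructor
          · intro h; exact h.2 (Γ x) ⟨x, hxC, rfl⟩
          · intro h
            refine ⟨hys, ?_⟩
            rintro z ⟨w, ⟨r, hr, rfl⟩, rfl⟩
            rw [map_smul, map_smul, LinearMap.smul_apply, smul_eq_mul]
            exact mul_nonneg (Complex.zero_le_real.mpr hr) h
        rw [hB'app, ← hL, ← hR, hset]
      obtain ⟨l, hl, h⟩ := key_prop B B' hBh hB'h hnd' hsign
      exact ⟨l, hl, fun x y => by rw [h x y, hB'app]⟩
  · constructor
    · rintro ⟨l, hl, hB⟩ D _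
      ext z
      simp only [dualConeL, Set.mem_image, Set.mem_setOf_eq]
      constructor
      · rintro ⟨x, ⟨hxs, hx⟩, rfl⟩
        refine ⟨by rw [← hΓ, hxs], fun y hy => ?_⟩
        have h1 := hx y hy
        rw [hB x y] at h1
        exact (zero_le_real_mul hl _).mp h1
      · rintro ⟨hzs, h⟩
        refine ⟨Γ.symm z, ⟨?_, fun y hy => ?_⟩, Γ.apply_symm_apply z⟩
        · apply Γ.injective
          rw [hΓ, Γ.apply_symm_apply, hzs]
        · rw [hB, Γ.apply_symm_apply]
          exact (zero_le_real_mul hl _).mpr (h y hy)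
    · intro hiii
      have hsign : ∀ x, star x = x → ∀ y, star y = y → (0 ≤ B x y ↔ 0 ≤ B' x y) := by
        intro x hxs y hys
        have hset := hiii {z | ∃ r : ℝ, 0 ≤ r ∧ z = (r:ℂ) • y} (rayCone_isCone hys)
        have hyD : y ∈ {z | ∃ r : ℝ, 0 ≤ r ∧ z = (r:ℂ) • y} := ⟨1, zero_le_one, by simp⟩
        have hL : Γ x ∈ ⇑Γ '' dualConeL B {z | ∃ r : ℝ, 0 ≤ r ∧ z = (r:ℂ) • y} ↔
            0 ≤ B x y := by
          constructor
          · rintro ⟨x', hx', hxx⟩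
            have hx'eq : x' = x := Γ.injective hxx
            subst hx'eq
            exact hx'.2 y hyD
          · intro h
            refine ⟨x, ⟨hxs, ?_⟩, rfl⟩
            rintro z ⟨r, hr, rfl⟩
            rw [map_smul, smul_eq_mul]
            exact mul_nonneg (Complex.zero_le_real.mpr hr) h
        have hR : Γ x ∈ dualConeL BY {z | ∃ r : ℝ, 0 ≤ r ∧ z = (r:ℂ) • y} ↔
            0 ≤ BY (Γ x) y := by
          constructor
          · intro h; exact h.2 y hyD
          · intro h
            refine ⟨by rw [← hΓ, hxs], ?_⟩
            rintro z ⟨r, hr, rfl⟩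
            rw [map_smul, smul_eq_mul]
            exact mul_nonneg (Complex.zero_le_real.mpr hr) h
        rw [hB'app, ← hL, ← hR, hset]
      obtain ⟨l, hl, h⟩ := key_prop B B' hBh hB'h hnd' hsign
      exact ⟨l, hl, fun x y => by rw [h x y, hB'app]⟩
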